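/- Let p be a prime, f ≥ 1, and (a_0,...,a_{f-1}) ∈ {1,...,p}^f with not all entries equal to p. For i ∈ Z/fZ set n_i = Σ_{j=1}^{f} a_{i+j} p^{f-j} (indices mod f). Then for every j with 0 ≤ j < e (for any positive integer e), the number of pairs (i, m) with i ∈ {0,...,f-1} and m an integer satisfying jp/(p-1) < m/(p^f-1) < (j+1)p/(p-1), p ∤ m, and m ≡ n_i (mod p^f - 1), counted with multiplicity over i, equals f. -/
import Mathlib


private lemma key1 (D P L k : ℤ) (hP : 0 < P) (hPD : P ≤ D) :
    (L < k * D ∧ k * D < L + D + P) ↔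
      (k = L / D + 1 ∨ ((L / D + 1) * D < L + P ∧ k = L / D + 2)) := by
  have hD : 0 < D := lt_of_lt_of_le hP hPD
  have hqr : D * (L / D) + L % D = L := Int.mul_ediv_add_emod L D
  have hr0 : 0 ≤ L % D := Int.emod_nonneg L hD.ne'
  have hrD : L % D < D := Int.emod_lt_of_pos L hD
  have e1 : (L / D + 1) * D = D * (L / D) + D := by ring
  have e2 : (L / D + 2) * D = D * (L / D) + 2 * D := by ring
  have e3 : (L / D + 3) * D = D * (L / D) + 3 * D := by ring
  constructor
  · rintro ⟨h1, h2⟩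
    have hk1 : L / D + 1 ≤ k := by
      by_contra h
      push_neg at h
      have hk : k ≤ L / D := by omega
      have h5 := mul_le_mul_of_nonneg_right hk hD.le
      have e0 : (L / D) * D = D * (L / D) := by ring
      linarith
    have hk2 : k ≤ L / D + 2 := by
      by_contra h
      push_neg at h
      have h3 : L / D + 3 ≤ k := by omega
      have := mul_le_mul_of_nonneg_right h3 hD.le
      linarith
    have hcase : k = L / D + 1 ∨ k = L / D + 2 := by omega
    rcases hcase with rfl | rfl
    · exact Or.inl rfl
    · exact Or.inr ⟨by linarith, rfl⟩
  · rintro (rfl | ⟨hE, rfl⟩)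
    · constructor <;> linarith
    · constructor <;> linarith

private lemma key2 (D P L k : ℤ) (hP : 0 < P) (hPD : P ≤ D) :
    (L < k * D ∧ k * D < L + P) ↔ ((L / D + 1) * D < L + P ∧ k = L / D + 1) := by
  have hD : 0 < D := lt_of_lt_of_le hP hPD
  have hqr : D * (L / D) + L % D = L := Int.mul_ediv_add_emod L D
  have hr0 : 0 ≤ L % D := Int.emod_nonneg L hD.ne'
  have hrD : L % D < D := Int.emod_lt_of_pos L hD
  have e1 : (L / D + 1) * D = D * (L / D) + D := by ring
  have e2 : (L / D + 2) * D = D * (L / D) + 2 * D := by ring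
  constructor
  · rintro ⟨h1, h2⟩
    have hk1 : L / D + 1 ≤ k := by
      by_contra h
      push_neg at h
      have hk : k ≤ L / D := by omega
      have := mul_le_mul_of_nonneg_right hk hD.le
      have e0 : (L / D) * D = D * (L / D) := by ring
      linarith
    have hk2 : k ≤ L / D + 1 := by
      by_contra h
      push_neg at h
      have h3 : L / D + 2 ≤ k := by omega
      have := mul_le_mul_of_nonneg_right h3 hD.le
      linarith
    have hke : k = L / D + 1 := by omega
    subst hke
    exact ⟨h2, rfl⟩
  · rintro ⟨hE, rfl⟩
    exact ⟨by linarith, hE⟩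

private lemma hrec_aux (p f : ℕ) (hf : 0 < f) (a n : ZMod f → ℤ)
    (hn : ∀ i, n i = ∑ j : Fin f, a (i + ((j : ℕ) : ZMod f) + 1) * (p : ℤ) ^ (f - 1 - (j : ℕ)))
    (i : ZMod f) : (p : ℤ) * n (i - 1) = n i + a i * ((p : ℤ) ^ f - 1) := by
  obtain ⟨f', rfl⟩ : ∃ f', f = f' + 1 := ⟨f - 1, by omega⟩
  have e0 : (p : ℤ) * n (i - 1)
      = a i * (p : ℤ) ^ (f' + 1)
        + ∑ j : Fin f', a (i + ((j : ℕ) : ZMod (f' + 1)) + 1) * (p : ℤ) ^ (f' - (j : ℕ)) := by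
    rw [hn, Finset.mul_sum, Fin.sum_univ_succ]
    simp only [Fin.val_zero, Fin.val_succ, Nat.cast_zero, Nat.cast_add, Nat.cast_one,
      Nat.add_sub_cancel, add_zero, Nat.sub_zero]
    congr 1
    · have hidx : i - 1 + 1 = i := by ring
      rw [hidx, pow_succ]
      ring
    · refine Finset.sum_congr rfl fun j _ => ?_
      have hidx : i - 1 + (((j : ℕ) : ZMod (f' + 1)) + 1) + 1 = i + ((j : ℕ) : ZMod (f' + 1)) + 1 := by
        ring
      rw [hidx]
      have hj : (j : ℕ) < f' := j.isLt
      have hexp : f' - (j : ℕ) = (f' - ((j : ℕ) + 1)) + 1 := by omega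
      rw [hexp, pow_succ]
      ring
  have e1 : n i
      = (∑ j : Fin f', a (i + ((j : ℕ) : ZMod (f' + 1)) + 1) * (p : ℤ) ^ (f' - (j : ℕ))) + a i := by
    rw [hn, Fin.sum_univ_castSucc]
    simp only [Fin.coe_castSucc, Fin.val_last, Nat.add_sub_cancel, Nat.sub_self, pow_zero, mul_one]
    congr 1
    have hcast : ((f' : ℕ) : ZMod (f' + 1)) + 1 = 0 := by
      have h := ZMod.natCast_self (f' + 1)
      push_cast at h
      exact h
    have hidx : i + ((f' : ℕ) : ZMod (f' + 1)) + 1 = i := by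
      rw [add_assoc, hcast, add_zero]
    rw [hidx]
  rw [e0, e1]
  ring



/-- Let `p` be a prime, `f ≥ 1`, and `(a 0, …, a (f-1)) ∈ {1,…,p}^f`
with not all entries equal to `p`.  For `i ∈ ℤ/fℤ` set
`n i = ∑_{j=1}^{f} a (i+j) * p^(f-j)` (indices mod `f`).  Then for every `j ≥ 0`
(in particular for every `0 ≤ j < e` for any positive `e`), the number of pairs
`(i, m)` with `i ∈ ℤ/fℤ` and `m ∈ ℤ` satisfying
`jp/(p-1) < m/(p^f-1) < (j+1)p/(p-1)`, `p ∤ m`, and `m ≡ n i (mod p^f - 1)`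
equals `f`. -/
theorem stmt_2 (p f : ℕ) (hp : p.Prime) (hf : 0 < f)
    (a : ZMod f → ℤ) (ha : ∀ i, 1 ≤ a i ∧ a i ≤ (p : ℤ)) (hnp : ¬ ∀ i, a i = (p : ℤ))
    (n : ZMod f → ℤ)
    (hn : ∀ i, n i = ∑ j : Fin f, a (i + ((j : ℕ) : ZMod f) + 1) * (p : ℤ) ^ (f - 1 - (j : ℕ)))
    (j : ℕ) :
    {q : ZMod f × ℤ |
        (j : ℤ) * (p : ℤ) * ((p : ℤ) ^ f - 1) < q.2 * ((p : ℤ) - 1) ∧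
        q.2 * ((p : ℤ) - 1) < ((j : ℤ) + 1) * (p : ℤ) * ((p : ℤ) ^ f - 1) ∧
        ¬ ((p : ℤ) ∣ q.2) ∧
        ((p : ℤ) ^ f - 1) ∣ (q.2 - n q.1)}.ncard = f := by
  classical
  haveI : NeZero f := ⟨hf.ne'⟩
  have hp1 : (1 : ℤ) < (p : ℤ) := by exact_mod_cast hp.one_lt
  have hp0 : (0 : ℤ) < (p : ℤ) := by linarith
  set P : ℤ := (p : ℤ) ^ f - 1 with hPdef
  have hpow : (1 : ℤ) < (p : ℤ) ^ f := one_lt_pow₀ hp1 hf.ne'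
  have hP : 0 < P := by rw [hPdef]; linarith
  set D : ℤ := ((p : ℤ) - 1) * P with hDdef
  have hPD : P ≤ D := by rw [hDdef]; nlinarith
  have hD : 0 < D := lt_of_lt_of_le hP hPD
  have hrec : ∀ i : ZMod f, (p : ℤ) * n (i - 1) = n i + a i * P :=
    fun i => hrec_aux p f hf a n hn i
  set L : ZMod f → ℤ := fun t => (j : ℤ) * P - ((p : ℤ) - 1) * n t with hLdef
  set K : ZMod f → ℤ := fun t => L t / D + 1 with hKdef
  set E : ZMod f → Prop := fun t => K t * D < L t + P with hEdef
  set mi : ZMod f → ℤ := fun i => n i + ((j : ℤ) + K i) * P with hmidef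
  set mu : ZMod f → ℤ := fun i => (p : ℤ) * (n (i - 1) + K (i - 1) * P) with hmudef
  set Ti : ZMod f → Finset ℤ := fun i => if E i then {mi i, mi i + P} else {mi i} with hTidef
  have hKE : ∀ t, L t < K t * D ∧ K t * D < L t + D + P := by
    intro t
    exact (key1 D P (L t) (K t) hP hPD).mpr (Or.inl (by simp only [hKdef]))
  have hjp : (j : ℤ) * p * P = (j : ℤ) * D + (j : ℤ) * P := by rw [hDdef]; ring
  have hjp1 : ((j : ℤ) + 1) * p * P = (j : ℤ) * D + (j : ℤ) * P + D + P := by rw [hDdef]; ring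
  have hLe : ∀ t, L t = (j : ℤ) * P - ((p : ℤ) - 1) * n t := fun t => by simp only [hLdef]
  have hcase1 : ∀ i : ZMod f,
      (j : ℤ) * p * P < mi i * ((p : ℤ) - 1) ∧
        mi i * ((p : ℤ) - 1) < ((j : ℤ) + 1) * p * P ∧ P ∣ mi i - n i := by
    intro i
    have hme : mi i * ((p : ℤ) - 1) = ((p : ℤ) - 1) * n i + (j : ℤ) * D + K i * D := by
      simp only [hmidef]; rw [hDdef]; ring
    refine ⟨?_, ?_, ⟨(j : ℤ) + K i, by simp only [hmidef]; ring⟩⟩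
    · linarith [(hKE i).1, hLe i]
    · linarith [(hKE i).2, hLe i]
  have hcase2 : ∀ i : ZMod f, E i →
      (j : ℤ) * p * P < (mi i + P) * ((p : ℤ) - 1) ∧
        (mi i + P) * ((p : ℤ) - 1) < ((j : ℤ) + 1) * p * P ∧ P ∣ mi i + P - n i := by
    intro i hEi
    have hEc : (L i / D + 1) * D < L i + P := by simpa only [hEdef, hKdef] using hEi
    have hco := (key1 D P (L i) (K i + 1) hP hPD).mpr (Or.inr ⟨hEc, by simp only [hKdef]; ring⟩)
    have hme : (mi i + P) * ((p : ℤ) - 1)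
        = ((p : ℤ) - 1) * n i + (j : ℤ) * D + (K i + 1) * D := by
      simp only [hmidef]; rw [hDdef]; ring
    refine ⟨?_, ?_, ⟨(j : ℤ) + K i + 1, by simp only [hmidef]; ring⟩⟩
    · linarith [hco.1, hLe i]
    · linarith [hco.2, hLe i]
  have hT : ∀ (i : ZMod f) (m : ℤ),
      ((j : ℤ) * p * P < m * ((p : ℤ) - 1) ∧ m * ((p : ℤ) - 1) < ((j : ℤ) + 1) * p * P ∧
        P ∣ m - n i) ↔ m ∈ Ti i := by
    intro i m
    constructor
    · rintro ⟨h1, h2, k, hk⟩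
      have hme : m * ((p : ℤ) - 1) = ((p : ℤ) - 1) * n i + k * D := by
        rw [hDdef]; linear_combination ((p : ℤ) - 1) * hk
      have hcond : L i < (k - (j : ℤ)) * D ∧ (k - (j : ℤ)) * D < L i + D + P := by
        have hx : (k - (j : ℤ)) * D = k * D - (j : ℤ) * D := by ring
        constructor <;> linarith [hLe i]
      have hKi : K i = L i / D + 1 := by simp only [hKdef]
      rcases (key1 D P (L i) (k - (j : ℤ)) hP hPD).mp hcond with hcase | ⟨hEc, hcase⟩
      · have hkk : k = (j : ℤ) + K i := by linarith
        rw [hkk] at hk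
        have hm : m = mi i := by simp only [hmidef]; linear_combination hk
        simp only [hTidef]
        split_ifs with hEi
        · exact Finset.mem_insert.mpr (Or.inl hm)
        · exact Finset.mem_singleton.mpr hm
      · have hEi : E i := by simp only [hEdef, hKdef]; exact hEc
        have hkk : k = (j : ℤ) + K i + 1 := by linarith
        rw [hkk] at hk
        have hm : m = mi i + P := by simp only [hmidef]; linear_combination hk
        simp only [hTidef]
        rw [if_pos hEi]
        exact Finset.mem_insert.mpr (Or.inr (Finset.mem_singleton.mpr hm))
    · intro hm
      simp only [hTidef] at hm
      split_ifs at hm with hEi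
      · rcases Finset.mem_insert.mp hm with rfl | hm2
        · exact hcase1 i
        · rw [Finset.mem_singleton.mp hm2]
          exact hcase2 i hEi
      · rw [Finset.mem_singleton.mp hm]
        exact hcase1 i
  have hcop : IsCoprime P (p : ℤ) := by
    refine ⟨-1, (p : ℤ) ^ (f - 1), ?_⟩
    have hpow' : (p : ℤ) ^ (f - 1) * p = (p : ℤ) ^ f := by
      rw [← pow_succ]
      congr 1
      omega
    rw [hPdef]
    linear_combination hpow'
  have hU : ∀ (i : ZMod f) (m : ℤ),
      ((j : ℤ) * p * P < m * ((p : ℤ) - 1) ∧ m * ((p : ℤ) - 1) < ((j : ℤ) + 1) * p * P ∧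
        (p : ℤ) ∣ m ∧ P ∣ m - n i) ↔ (E (i - 1) ∧ m = mu i) := by
    intro i m
    constructor
    · rintro ⟨h1, h2, ⟨m', rfl⟩, hdvd⟩
      have hd2 : P ∣ (m' - n (i - 1)) * (p : ℤ) := by
        obtain ⟨c, hc⟩ := hdvd
        exact ⟨c - a i, by linear_combination hc - hrec i⟩
      obtain ⟨k, hk⟩ := hcop.dvd_of_dvd_mul_right hd2
      have e1 : (j : ℤ) * (p : ℤ) * P = (p : ℤ) * ((j : ℤ) * P) := by ring
      have e2 : ((p : ℤ) * m') * ((p : ℤ) - 1) = (p : ℤ) * (m' * ((p : ℤ) - 1)) := by ring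
      have e3 : ((j : ℤ) + 1) * (p : ℤ) * P = (p : ℤ) * (((j : ℤ) + 1) * P) := by ring
      have hp1' : (j : ℤ) * P < m' * ((p : ℤ) - 1) :=
        lt_of_mul_lt_mul_left (by linarith) hp0.le
      have hp2' : m' * ((p : ℤ) - 1) < ((j : ℤ) + 1) * P :=
        lt_of_mul_lt_mul_left (by linarith) hp0.le
      have hme : m' * ((p : ℤ) - 1) = ((p : ℤ) - 1) * n (i - 1) + k * D := by
        rw [hDdef]; linear_combination ((p : ℤ) - 1) * hk
      have hcond : L (i - 1) < k * D ∧ k * D < L (i - 1) + P := by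
        constructor <;> linarith [hLe (i - 1)]
      obtain ⟨hEc, hkk⟩ := (key2 D P (L (i - 1)) k hP hPD).mp hcond
      refine ⟨by simp only [hEdef, hKdef]; exact hEc, ?_⟩
      have hKi : K (i - 1) = L (i - 1) / D + 1 := by simp only [hKdef]
      have hKk : k = K (i - 1) := by linarith
      rw [hKk] at hk
      simp only [hmudef]
      linear_combination (p : ℤ) * hk
    · rintro ⟨hEi, rfl⟩
      have hEc : (L (i - 1) / D + 1) * D < L (i - 1) + P := by
        simpa only [hEdef, hKdef] using hEi
      have hco := (key2 D P (L (i - 1)) (K (i - 1)) hP hPD).mpr ⟨hEc, by simp only [hKdef]⟩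
      have hme : (n (i - 1) + K (i - 1) * P) * ((p : ℤ) - 1)
          = ((p : ℤ) - 1) * n (i - 1) + K (i - 1) * D := by
        rw [hDdef]; ring
      have hiq1 : (j : ℤ) * P < (n (i - 1) + K (i - 1) * P) * ((p : ℤ) - 1) := by
        linarith [hco.1, hLe (i - 1)]
      have hiq2 : (n (i - 1) + K (i - 1) * P) * ((p : ℤ) - 1) < ((j : ℤ) + 1) * P := by
        linarith [hco.2, hLe (i - 1)]
      have e1 : (j : ℤ) * (p : ℤ) * P = (p : ℤ) * ((j : ℤ) * P) := by ring
      have e3 : ((j : ℤ) + 1) * (p : ℤ) * P = (p : ℤ) * (((j : ℤ) + 1) * P) := by ring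
      refine ⟨?_, ?_, ?_, ?_⟩
      · have h := mul_lt_mul_of_pos_left hiq1 hp0
        have e2 : mu i * ((p : ℤ) - 1)
            = (p : ℤ) * ((n (i - 1) + K (i - 1) * P) * ((p : ℤ) - 1)) := by
          simp only [hmudef]; ring
        linarith
      · have h := mul_lt_mul_of_pos_left hiq2 hp0
        have e2 : mu i * ((p : ℤ) - 1)
            = (p : ℤ) * ((n (i - 1) + K (i - 1) * P) * ((p : ℤ) - 1)) := by
          simp only [hmudef]; ring
        linarith
      · exact ⟨n (i - 1) + K (i - 1) * P, by simp only [hmudef]⟩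
      · refine ⟨a i + (p : ℤ) * K (i - 1), ?_⟩
        simp only [hmudef]
        linear_combination hrec i
  set B : ZMod f → Finset (ZMod f × ℤ) :=
    fun i => ((Ti i).filter fun m => ¬ (p : ℤ) ∣ m).image fun m => (i, m) with hBdef
  have hS : {q : ZMod f × ℤ |
      (j : ℤ) * (p : ℤ) * P < q.2 * ((p : ℤ) - 1) ∧
      q.2 * ((p : ℤ) - 1) < ((j : ℤ) + 1) * (p : ℤ) * P ∧
      ¬ ((p : ℤ) ∣ q.2) ∧ P ∣ (q.2 - n q.1)} = ↑(Finset.univ.biUnion B) := by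
    ext q
    obtain ⟨i, m⟩ := q
    simp only [Set.mem_setOf_eq, Finset.mem_coe]
    constructor
    · rintro ⟨h1, h2, h3, h4⟩
      refine Finset.mem_biUnion.mpr ⟨i, Finset.mem_univ i, ?_⟩
      simp only [hBdef]
      exact Finset.mem_image.mpr ⟨m, Finset.mem_filter.mpr ⟨(hT i m).mp ⟨h1, h2, h4⟩, h3⟩, rfl⟩
    · intro hq
      obtain ⟨i', _, hmem⟩ := Finset.mem_biUnion.mp hq
      simp only [hBdef] at hmem
      obtain ⟨m', hm', heq⟩ := Finset.mem_image.mp hmem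
      obtain ⟨hmem', hnd⟩ := Finset.mem_filter.mp hm'
      injection heq with hq1 hq2
      subst hq1
      subst hq2
      have hh := (hT i' m').mpr hmem'
      exact ⟨hh.1, hh.2.1, hnd, hh.2.2⟩
  rw [hS, Set.ncard_coe_finset]
  have hdisj : ∀ i ∈ (Finset.univ : Finset (ZMod f)), ∀ i' ∈ Finset.univ, i ≠ i' →
      Disjoint (B i) (B i') := by
    intro i _ i' _ hne
    simp only [Finset.disjoint_left, hBdef, Finset.mem_image]
    rintro x ⟨m, _, rfl⟩ ⟨m', _, hx⟩
    exact hne (by simpa using congrArg Prod.fst hx.symm)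
  rw [Finset.card_biUnion hdisj]
  have hBcard : ∀ i, (B i).card = ((Ti i).filter fun m => ¬ (p : ℤ) ∣ m).card := by
    intro i
    simp only [hBdef]
    exact Finset.card_image_of_injective _ (fun m1 m2 h => by simpa using h)
  have hTcard : ∀ i : ZMod f, (Ti i).card = if E i then 2 else 1 := by
    intro i
    simp only [hTidef]
    split_ifs with hEi
    · rw [Finset.card_insert_of_notMem, Finset.card_singleton]
      simp only [Finset.mem_singleton]
      intro h
      have : P = 0 := by linarith
      exact hP.ne' this
    · exact Finset.card_singleton _
  have hUcard : ∀ i : ZMod f,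
      ((Ti i).filter fun m => (p : ℤ) ∣ m).card = if E (i - 1) then 1 else 0 := by
    intro i
    have hfe : (Ti i).filter (fun m => (p : ℤ) ∣ m)
        = if E (i - 1) then {mu i} else (∅ : Finset ℤ) := by
      ext m
      simp only [Finset.mem_filter]
      constructor
      · rintro ⟨hmem, hdvd⟩
        have hh := (hT i m).mpr hmem
        have hu := (hU i m).mp ⟨hh.1, hh.2.1, hdvd, hh.2.2⟩
        rw [if_pos hu.1]
        simp [hu.2]
      · intro hmm
        split_ifs at hmm with hEi
        · have hm : m = mu i := by simpa using hmm
          have hu := (hU i m).mpr ⟨hEi, hm⟩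
          exact ⟨(hT i m).mp ⟨hu.1, hu.2.1, hu.2.2.2⟩, hu.2.2.1⟩
        · simp at hmm
    rw [hfe]
    split_ifs <;> simp
  have hsum1 : ∀ i : ZMod f,
      ((Ti i).filter fun m => ¬ (p : ℤ) ∣ m).card + (if E (i - 1) then 1 else 0)
        = if E i then 2 else 1 := by
    intro i
    rw [← hUcard i, ← hTcard i, add_comm]
    exact Finset.card_filter_add_card_filter_not _
  have hBsum : ∑ i : ZMod f, (B i).card
      = ∑ i : ZMod f, ((Ti i).filter fun m => ¬ (p : ℤ) ∣ m).card :=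
    Finset.sum_congr rfl fun i _ => hBcard i
  have hEq1 : (∑ i : ZMod f, ((Ti i).filter fun m => ¬ (p : ℤ) ∣ m).card)
      + (∑ i : ZMod f, if E (i - 1) then 1 else 0)
      = ∑ i : ZMod f, (if E i then 2 else 1) := by
    rw [← Finset.sum_add_distrib]
    exact Finset.sum_congr rfl fun i _ => hsum1 i
  have hEq2 : (∑ i : ZMod f, if E (i - 1) then 1 else 0)
      = ∑ i : ZMod f, if E i then 1 else 0 :=
    Fintype.sum_equiv (Equiv.subRight (1 : ZMod f)) _ _ (fun i => rfl)
  have hEq3 : (∑ i : ZMod f, (if E i then 2 else 1))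
      = f + ∑ i : ZMod f, (if E i then 1 else 0) := by
    have h21 : ∀ i : ZMod f, (if E i then 2 else 1) = 1 + (if E i then 1 else 0) := by
      intro i; split_ifs <;> rfl
    rw [Finset.sum_congr rfl fun i _ => h21 i, Finset.sum_add_distrib]
    simp [Finset.card_univ, ZMod.card]
  omega
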